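/- Let T be a faithfully flat H-Galois object over k. Then for every x ∈ T one has ρ(θ(x)) = θ(x₍₀₎) ⊗ S²(x₍₁₎) in T ⊗ H; that is, θ is H-colinear from T with its given coaction to T with the coaction twisted by the Hopf algebra endomorphism S². -/

import Mathlib

open TensorProduct LinearMap HopfAlgebra

namespace Stmt9

open Coalgebra



variable {k : Type*} [CommRing k] {H : Type*} [Ring H] [HopfAlgebra k H]
variable {A : Type*} [Ring A] [Algebra k A]

/-- Convolution product of two linear maps `H →ₗ[k] A`. -/
noncomputable def conv (f g : H →ₗ[k] A) : H →ₗ[k] A :=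
  LinearMap.mul' k A ∘ₗ TensorProduct.map f g ∘ₗ Coalgebra.comul

lemma conv_apply (f g : H →ₗ[k] A) (h : H) :
    conv f g h = LinearMap.mul' k A (TensorProduct.map f g (Coalgebra.comul h)) := rfl

/-- Convolution unit. -/
noncomputable def convUnit : H →ₗ[k] A := Algebra.linearMap k A ∘ₗ Coalgebra.counit

lemma convUnit_apply (h : H) :
    (convUnit : H →ₗ[k] A) h = algebraMap k A (Coalgebra.counit h) := rfl

lemma conv_assoc (f g l : H →ₗ[k] A) : conv (conv f g) l = conv f (conv g l) := by
  ext h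
  have key : ∀ w : (H ⊗[k] H) ⊗[k] H,
      LinearMap.mul' k A (TensorProduct.map (LinearMap.mul' k A ∘ₗ TensorProduct.map f g) l w)
        = LinearMap.mul' k A (TensorProduct.map f (LinearMap.mul' k A ∘ₗ TensorProduct.map g l)
            (TensorProduct.assoc k H H H w)) := by
    intro w
    induction w using TensorProduct.induction_on with
    | zero => simp
    | add u v hu hv => simp [map_add, hu, hv]
    | tmul y c =>
      induction y using TensorProduct.induction_on with
      | zero => simp
      | add u v hu hv => simp only [add_tmul, map_add, hu, hv]
      | tmul a b => simp [mul_assoc]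
  have step1 : ∀ w : H ⊗[k] H,
      TensorProduct.map (conv f g) l w
        = TensorProduct.map (LinearMap.mul' k A ∘ₗ TensorProduct.map f g) l
            ((Coalgebra.comul (R := k)).rTensor H w) := by
    intro w
    induction w using TensorProduct.induction_on with
    | zero => simp
    | add u v hu hv => simp [map_add, hu, hv]
    | tmul a b => simp [conv_apply]
  have step2 : ∀ w : H ⊗[k] H,
      TensorProduct.map f (conv g l) w
        = TensorProduct.map f (LinearMap.mul' k A ∘ₗ TensorProduct.map g l)
            ((Coalgebra.comul (R := k)).lTensor H w) := by
    intro w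
    induction w using TensorProduct.induction_on with
    | zero => simp
    | add u v hu hv => simp [map_add, hu, hv]
    | tmul a b => simp [conv_apply]
  rw [conv_apply, conv_apply, step1, step2, key, Coalgebra.coassoc_apply]

lemma convUnit_conv (f : H →ₗ[k] A) : conv convUnit f = f := by
  ext h
  have key : ∀ w : H ⊗[k] H,
      LinearMap.mul' k A (TensorProduct.map (convUnit : H →ₗ[k] A) f w)
        = f ((TensorProduct.lid k H) ((Coalgebra.counit (R := k)).rTensor H w)) := by
    intro w
    induction w using TensorProduct.induction_on with
    | zero => simp
    | add u v hu hv => simp [map_add, hu, hv]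
    | tmul a b =>
      simp only [TensorProduct.map_tmul, LinearMap.mul'_apply, convUnit_apply,
        LinearMap.rTensor_tmul, TensorProduct.lid_tmul, map_smul]
      rw [← Algebra.smul_def]
  rw [conv_apply, key, Coalgebra.rTensor_counit_comul]
  simp

lemma conv_convUnit (f : H →ₗ[k] A) : conv f convUnit = f := by
  ext h
  have key : ∀ w : H ⊗[k] H,
      LinearMap.mul' k A (TensorProduct.map f (convUnit : H →ₗ[k] A) w)
        = f ((TensorProduct.rid k H) ((Coalgebra.counit (R := k)).lTensor H w)) := by
    intro w
    induction w using TensorProduct.induction_on with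
    | zero => simp
    | add u v hu hv => simp [map_add, hu, hv]
    | tmul a b =>
      simp only [TensorProduct.map_tmul, LinearMap.mul'_apply, convUnit_apply,
        LinearMap.lTensor_tmul, TensorProduct.rid_tmul, map_smul]
      rw [← Algebra.commutes, ← Algebra.smul_def]
  rw [conv_apply, key, Coalgebra.lTensor_counit_comul]
  simp

lemma conv_unique (f g f' : H →ₗ[k] A) (h1 : conv f g = convUnit)
    (h2 : conv g f' = convUnit) : f = f' := by
  have := conv_assoc f g f'
  rw [h1, convUnit_conv, h2, conv_convUnit] at this
  exact this.symm

lemma conv_algHom_antipode (φ : H →ₐ[k] A) :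
    conv φ.toLinearMap (φ.toLinearMap ∘ₗ HopfAlgebra.antipode (R := k)) = convUnit := by
  ext h
  have key : ∀ w : H ⊗[k] H,
      LinearMap.mul' k A (TensorProduct.map φ.toLinearMap
          (φ.toLinearMap ∘ₗ HopfAlgebra.antipode (R := k)) w)
        = φ (LinearMap.mul' k H ((HopfAlgebra.antipode (R := k)).lTensor H w)) := by
    intro w
    induction w using TensorProduct.induction_on with
    | zero => simp
    | add u v hu hv => simp [map_add, hu, hv]
    | tmul a b => simp
  rw [conv_apply, key, mul_antipode_lTensor_comul_apply, convUnit_apply]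
  simp

lemma antipode_algHom_conv (φ : H →ₐ[k] A) :
    conv (φ.toLinearMap ∘ₗ HopfAlgebra.antipode (R := k)) φ.toLinearMap = convUnit := by
  ext h
  have key : ∀ w : H ⊗[k] H,
      LinearMap.mul' k A (TensorProduct.map
          (φ.toLinearMap ∘ₗ HopfAlgebra.antipode (R := k)) φ.toLinearMap w)
        = φ (LinearMap.mul' k H ((HopfAlgebra.antipode (R := k)).rTensor H w)) := by
    intro w
    induction w using TensorProduct.induction_on with
    | zero => simp
    | add u v hu hv => simp [map_add, hu, hv]
    | tmul a b => simp
  rw [conv_apply, key, mul_antipode_rTensor_comul_apply, convUnit_apply]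
  simp

set_option maxHeartbeats 1000000 in
lemma comul_antipode :
    (Coalgebra.comul (R := k) (A := H)) ∘ₗ HopfAlgebra.antipode (R := k)
      = TensorProduct.map (HopfAlgebra.antipode (R := k)) (HopfAlgebra.antipode (R := k))
          ∘ₗ (TensorProduct.comm k H H).toLinearMap ∘ₗ Coalgebra.comul := by
  set S : H →ₗ[k] H := HopfAlgebra.antipode (R := k) with hS
  set g' : H →ₗ[k] H ⊗[k] H :=
    TensorProduct.map S S ∘ₗ (TensorProduct.comm k H H).toLinearMap ∘ₗ Coalgebra.comul with hg'
  apply conv_unique _ (Coalgebra.comul (R := k) (A := H)) _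
  · -- conv (comul ∘ S) comul = convUnit
    have e0 : (Bialgebra.comulAlgHom k H).toLinearMap
        = (Coalgebra.comul : H →ₗ[k] H ⊗[k] H) := by
      ext a; simp
    have := antipode_algHom_conv (A := H ⊗[k] H) (Bialgebra.comulAlgHom k H)
    rwa [e0] at this
  · -- conv comul g' = convUnit
    ext h
    set G : H ⊗[k] (H ⊗[k] H) →ₗ[k] H ⊗[k] H :=
      LinearMap.mul' k (H ⊗[k] H) ∘ₗ TensorProduct.map Coalgebra.comul
        (TensorProduct.map S S ∘ₗ (TensorProduct.comm k H H).toLinearMap) with hG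
    have e1 : ∀ w : H ⊗[k] H,
        LinearMap.mul' k (H ⊗[k] H) (TensorProduct.map (Coalgebra.comul (R := k)) g' w)
          = G ((Coalgebra.comul (R := k)).lTensor H w) := by
      intro w
      induction w using TensorProduct.induction_on with
      | zero => simp
      | add u v hu hv => simp only [map_add, hu, hv]
      | tmul a b => simp [hg', hG]
    have stepA : ∀ p d : H,
        G ((TensorProduct.assoc k H H H) ((Coalgebra.comul (R := k) p) ⊗ₜ[k] d))
          = (p * S d) ⊗ₜ[k] (1 : H) := by
      intro p d
      set r := Coalgebra.Repr.arbitrary k p with hr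
      set ra : (i : r.ι) → Coalgebra.Repr k (r.left i) (H × H) :=
        fun i => Coalgebra.Repr.arbitrary k _ with hra
      set rc : (i : r.ι) → Coalgebra.Repr k (r.right i) (H × H) :=
        fun i => Coalgebra.Repr.arbitrary k _ with hrc
      set Ld : H ⊗[k] (H ⊗[k] H) →ₗ[k] H ⊗[k] H :=
        TensorProduct.map (LinearMap.mulRight k (S d))
          (LinearMap.mul' k H ∘ₗ S.lTensor H) with hLd
      have happ := congrArg Ld (Coalgebra.sum_tmul_tmul_eq r ra rc)
      simp only [map_sum, hLd, TensorProduct.map_tmul, LinearMap.mulRight_apply,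
        LinearMap.coe_comp, Function.comp_apply, LinearMap.lTensor_tmul,
        LinearMap.mul'_apply] at happ
      -- LHS : G (assoc ((comul p) ⊗ d)) equals the LHS of happ
      have lhs_eq : G ((TensorProduct.assoc k H H H) ((Coalgebra.comul (R := k) p) ⊗ₜ[k] d))
          = ∑ i ∈ r.index, ∑ j ∈ (ra i).index,
              ((ra i).left j * S d) ⊗ₜ[k] ((ra i).right j * S (r.right i)) := by
        rw [← r.eq]
        rw [TensorProduct.sum_tmul, map_sum, map_sum]
        refine Finset.sum_congr rfl fun i _ => ?_
        rw [TensorProduct.assoc_tmul]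
        simp only [hG, LinearMap.coe_comp, Function.comp_apply, TensorProduct.map_tmul,
          LinearEquiv.coe_coe, TensorProduct.comm_tmul, LinearMap.mul'_apply]
        rw [← (ra i).eq, Finset.sum_mul]
        refine Finset.sum_congr rfl fun j _ => ?_
        simp only [TensorProduct.map_tmul, LinearEquiv.coe_coe, TensorProduct.comm_tmul,
          Algebra.TensorProduct.tmul_mul_tmul]
      -- RHS of happ collapses
      have rhs_eq : (∑ i ∈ r.index, ∑ j ∈ (rc i).index,
            (r.left i * S d) ⊗ₜ[k] ((rc i).left j * S ((rc i).right j)))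
          = (p * S d) ⊗ₜ[k] (1 : H) := by
        have inner : ∀ i ∈ r.index, (∑ j ∈ (rc i).index,
            (r.left i * S d) ⊗ₜ[k] ((rc i).left j * S ((rc i).right j)))
            = (Coalgebra.counit (R := k) (r.right i)) •
                ((r.left i * S d) ⊗ₜ[k] (1 : H)) := by
          intro i _
          rw [← TensorProduct.tmul_sum, HopfAlgebra.sum_mul_antipode_eq_algebraMap_counit (rc i),
            Algebra.algebraMap_eq_smul_one, TensorProduct.tmul_smul]
        rw [Finset.sum_congr rfl inner]
        have collapse : ∑ i ∈ r.index, (Coalgebra.counit (R := k) (r.right i)) • r.left i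
            = p := by
          have h0 := congrArg (TensorProduct.rid k H) (Coalgebra.sum_tmul_counit_eq r)
          simp only [map_sum, TensorProduct.rid_tmul, one_smul] at h0
          exact h0
        calc ∑ i ∈ r.index, (Coalgebra.counit (R := k) (r.right i)) •
                ((r.left i * S d) ⊗ₜ[k] (1 : H))
            = ∑ i ∈ r.index, (((Coalgebra.counit (R := k) (r.right i)) • r.left i) * S d)
                ⊗ₜ[k] (1 : H) := by
              refine Finset.sum_congr rfl fun i _ => ?_
              rw [smul_mul_assoc, ← TensorProduct.smul_tmul']
          _ = (p * S d) ⊗ₜ[k] (1 : H) := by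
              rw [← TensorProduct.sum_tmul, ← Finset.sum_mul, collapse]
      rw [lhs_eq, happ, rhs_eq]
    -- assemble
    rw [conv_apply, e1, ← Coalgebra.coassoc_apply]
    set rh := Coalgebra.Repr.arbitrary k h with hrh
    rw [← rh.eq]
    rw [map_sum, map_sum, map_sum]
    have : ∀ i ∈ rh.index,
        G ((TensorProduct.assoc k H H H)
          ((Coalgebra.comul (R := k)).rTensor H (rh.left i ⊗ₜ[k] rh.right i)))
          = (rh.left i * S (rh.right i)) ⊗ₜ[k] (1 : H) := by
      intro i _
      rw [LinearMap.rTensor_tmul, stepA]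
    rw [Finset.sum_congr rfl this, ← TensorProduct.sum_tmul,
      HopfAlgebra.sum_mul_antipode_eq_algebraMap_counit rh, convUnit_apply,
      Algebra.TensorProduct.algebraMap_apply]



variable {T : Type*} [Ring T] [Algebra k T]
variable (ρ : T →ₐ[k] T ⊗[k] H) (β : T ⊗[k] T →ₗ[k] T ⊗[k] H) (γ : H →ₗ[k] T ⊗[k] T)

lemma rTensor_inj (hβbij : Function.Bijective β) :
    Function.Injective (LinearMap.rTensor H β) := by
  set e := LinearEquiv.ofBijective β hβbij with he
  have key : ∀ z : (T ⊗[k] T) ⊗[k] H,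
      LinearMap.rTensor H (e.symm.toLinearMap) (LinearMap.rTensor H β z) = z := by
    intro z
    rw [← LinearMap.comp_apply, ← LinearMap.rTensor_comp]
    have h0 : e.symm.toLinearMap ∘ₗ β = LinearMap.id := by
      ext v
      simp [he]
    rw [h0, LinearMap.rTensor_id, LinearMap.id_apply]
  exact Function.LeftInverse.injective key

lemma mulTH_map_rho (v : T ⊗[k] T) :
    LinearMap.mul' k (T ⊗[k] H) (TensorProduct.map ρ.toLinearMap ρ.toLinearMap v)
      = ρ (LinearMap.mul' k T v) := by
  induction v using TensorProduct.induction_on with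
  | zero => simp
  | add u v hu hv => simp only [map_add, hu, hv]
  | tmul a c => simp

lemma G6 (hβ : ∀ x y : T, β (x ⊗ₜ[k] y) = (x ⊗ₜ[k] (1 : H)) * ρ y)
    (hγ : ∀ h : H, β (γ h) = (1 : T) ⊗ₜ[k] h)
    (hcounit : ∀ x : T,
      (TensorProduct.rid k T)
        ((TensorProduct.map LinearMap.id Coalgebra.counit) (ρ x)) = x)
    (h : H) :
    LinearMap.mul' k T (γ h) = Coalgebra.counit (R := k) h • (1 : T) := by
  set E : T ⊗[k] H →ₗ[k] T :=
    (TensorProduct.rid k T).toLinearMap ∘ₗ LinearMap.lTensor T (Coalgebra.counit (R := k))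
    with hE
  have hmul : ∀ (a : T) (u : T ⊗[k] H), E ((a ⊗ₜ[k] (1 : H)) * u) = a * E u := by
    intro a u
    induction u using TensorProduct.induction_on with
    | zero => simp
    | add u v hu hv => simp only [mul_add, map_add, hu, hv]
    | tmul c g =>
      simp [hE, Algebra.TensorProduct.tmul_mul_tmul, mul_smul_comm]
  have hEβ : ∀ v : T ⊗[k] T, E (β v) = LinearMap.mul' k T v := by
    intro v
    induction v using TensorProduct.induction_on with
    | zero => simp
    | add u v hu hv => simp only [map_add, hu, hv]
    | tmul a c =>
      rw [hβ, hmul]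
      have : E (ρ c) = c := by
        exact hcounit c
      rw [this, LinearMap.mul'_apply]
  have := hEβ (γ h)
  rw [hγ h] at this
  simp only [hE, LinearMap.coe_comp, LinearEquiv.coe_coe, Function.comp_apply,
    LinearMap.lTensor_tmul, TensorProduct.rid_tmul] at this
  exact this.symm






set_option maxHeartbeats 1000000 in
set_option synthInstance.maxHeartbeats 400000 in
lemma G4 (hcoassoc : ∀ x : T,
      (TensorProduct.map ρ.toLinearMap LinearMap.id) (ρ x)
        = (TensorProduct.assoc k T H H).symm
            ((TensorProduct.map LinearMap.id Coalgebra.comul) (ρ x)))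
    (hβ : ∀ x y : T, β (x ⊗ₜ[k] y) = (x ⊗ₜ[k] (1 : H)) * ρ y)
    (hγ : ∀ h : H, β (γ h) = (1 : T) ⊗ₜ[k] h)
    (hβbij : Function.Bijective β) (h : H) :
    LinearMap.lTensor T ρ.toLinearMap (γ h)
      = TensorProduct.assoc k T T H ((LinearMap.rTensor H γ) (Coalgebra.comul h)) := by
  have inj := rTensor_inj (k := k) (H := H) (T := T) β hβbij
  have einj : Function.Injective
      (fun z : T ⊗[k] (T ⊗[k] H) =>
        LinearMap.rTensor H β ((TensorProduct.assoc k T T H).symm z)) :=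
    inj.comp (TensorProduct.assoc k T T H).symm.injective
  have micro4 : ∀ w : H ⊗[k] H,
      LinearMap.rTensor H β (LinearMap.rTensor H γ w)
        = (TensorProduct.assoc k T H H).symm ((1 : T) ⊗ₜ[k] w) := by
    intro w
    induction w using TensorProduct.induction_on with
    | zero => simp
    | add u v hu hv => simp only [map_add, tmul_add, hu, hv]
    | tmul g1 g2 => simp [hγ g1]
  have HA : ∀ v : T ⊗[k] T,
      LinearMap.rTensor H β ((TensorProduct.assoc k T T H).symm
          (LinearMap.lTensor T ρ.toLinearMap v))
        = (TensorProduct.assoc k T H H).symm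
            (LinearMap.lTensor T (Coalgebra.comul (R := k)) (β v)) := by
    intro v
    induction v using TensorProduct.induction_on with
    | zero => simp
    | add u v hu hv => simp only [map_add, hu, hv]
    | tmul a c =>
      have micro1 : ∀ u : T ⊗[k] H,
          LinearMap.rTensor H β ((TensorProduct.assoc k T T H).symm (a ⊗ₜ[k] u))
            = LinearMap.rTensor H (LinearMap.mulLeft k (a ⊗ₜ[k] (1 : H)))
                (TensorProduct.map ρ.toLinearMap LinearMap.id u) := by
        intro u
        induction u using TensorProduct.induction_on with
        | zero => simp
        | add u v hu hv => simp only [map_add, tmul_add, hu, hv]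
        | tmul c' g => simp [hβ]
      have micro2 : ∀ z : T ⊗[k] (H ⊗[k] H),
          LinearMap.rTensor H (LinearMap.mulLeft k (a ⊗ₜ[k] (1 : H)))
              ((TensorProduct.assoc k T H H).symm z)
            = (TensorProduct.assoc k T H H).symm
                (LinearMap.rTensor (H ⊗[k] H) (LinearMap.mulLeft k a) z) := by
        intro z
        induction z using TensorProduct.induction_on with
        | zero => simp
        | add u v hu hv => simp only [map_add, hu, hv]
        | tmul c' w =>
          induction w using TensorProduct.induction_on with
          | zero => simp
          | add u v hu hv => simp only [map_add, tmul_add, hu, hv]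
          | tmul g1 g2 =>
            simp [Algebra.TensorProduct.tmul_mul_tmul]
      have micro3 : ∀ u : T ⊗[k] H,
          LinearMap.rTensor (H ⊗[k] H) (LinearMap.mulLeft k a)
              (LinearMap.lTensor T (Coalgebra.comul (R := k)) u)
            = LinearMap.lTensor T (Coalgebra.comul (R := k)) ((a ⊗ₜ[k] (1 : H)) * u) := by
        intro u
        induction u using TensorProduct.induction_on with
        | zero => simp
        | add u v hu hv => simp only [map_add, mul_add, hu, hv]
        | tmul c' g => simp [Algebra.TensorProduct.tmul_mul_tmul]
      have hlt : (TensorProduct.map (LinearMap.id (M := T)) (Coalgebra.comul (R := k) (A := H)))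
          = LinearMap.lTensor T (Coalgebra.comul (R := k)) := rfl
      rw [LinearMap.lTensor_tmul, micro1, show (ρ.toLinearMap : T →ₗ[k] T ⊗[k] H) c = ρ c from rfl,
        hcoassoc c, hlt, micro2, micro3, ← hβ a c]
  refine einj ?_
  show LinearMap.rTensor H β ((TensorProduct.assoc k T T H).symm
        (LinearMap.lTensor T ρ.toLinearMap (γ h)))
      = LinearMap.rTensor H β ((TensorProduct.assoc k T T H).symm
        (TensorProduct.assoc k T T H ((LinearMap.rTensor H γ) (Coalgebra.comul h))))
  rw [LinearEquiv.symm_apply_apply, micro4, HA (γ h), hγ h, LinearMap.lTensor_tmul]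


set_option maxHeartbeats 1000000 in
set_option synthInstance.maxHeartbeats 400000 in
lemma PsiEq
    (hcoassoc : ∀ x : T,
      (TensorProduct.map ρ.toLinearMap LinearMap.id) (ρ x)
        = (TensorProduct.assoc k T H H).symm
            ((TensorProduct.map LinearMap.id Coalgebra.comul) (ρ x)))
    (hcounit : ∀ x : T,
      (TensorProduct.rid k T)
        ((TensorProduct.map LinearMap.id Coalgebra.counit) (ρ x)) = x)
    (hβ : ∀ x y : T, β (x ⊗ₜ[k] y) = (x ⊗ₜ[k] (1 : H)) * ρ y)
    (hβbij : Function.Bijective β)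
    (hγ : ∀ h : H, β (γ h) = (1 : T) ⊗ₜ[k] h) :
    LinearMap.mul' k (T ⊗[k] H)
        ∘ₗ TensorProduct.map ρ.toLinearMap ((TensorProduct.mk k T H).flip (1 : H)) ∘ₗ γ
      = (TensorProduct.mk k T H) (1 : T) ∘ₗ HopfAlgebra.antipode (R := k) := by
  have hiota : (Algebra.TensorProduct.includeRight : H →ₐ[k] T ⊗[k] H).toLinearMap
      = (TensorProduct.mk k T H) (1 : T) := by
    ext h; rfl
  apply conv_unique _ ((TensorProduct.mk k T H) (1 : T)) _
  · -- conv Ψ ι = convUnit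
    ext h
    rw [conv_apply]
    have e1 : ∀ w : H ⊗[k] H,
        TensorProduct.map (LinearMap.mul' k (T ⊗[k] H)
            ∘ₗ TensorProduct.map ρ.toLinearMap ((TensorProduct.mk k T H).flip (1 : H)) ∘ₗ γ)
          ((TensorProduct.mk k T H) (1 : T)) w
          = TensorProduct.map
              (LinearMap.mul' k (T ⊗[k] H)
                ∘ₗ TensorProduct.map ρ.toLinearMap ((TensorProduct.mk k T H).flip (1 : H)))
              ((TensorProduct.mk k T H) (1 : T)) (LinearMap.rTensor H γ w) := by
      intro w
      induction w using TensorProduct.induction_on with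
      | zero => simp
      | add u v hu hv => simp only [map_add, hu, hv]
      | tmul a b => simp
    rw [e1]
    have hG4 : LinearMap.rTensor H γ (Coalgebra.comul h)
        = (TensorProduct.assoc k T T H).symm (LinearMap.lTensor T ρ.toLinearMap (γ h)) := by
      rw [G4 ρ β γ hcoassoc hβ hγ hβbij h, LinearEquiv.symm_apply_apply]
    rw [hG4]
    have ZL : ∀ v : T ⊗[k] (T ⊗[k] H),
        LinearMap.mul' k (T ⊗[k] H)
            (TensorProduct.map
              (LinearMap.mul' k (T ⊗[k] H)
                ∘ₗ TensorProduct.map ρ.toLinearMap ((TensorProduct.mk k T H).flip (1 : H)))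
              ((TensorProduct.mk k T H) (1 : T)) ((TensorProduct.assoc k T T H).symm v))
          = LinearMap.mul' k (T ⊗[k] H) (LinearMap.rTensor (T ⊗[k] H) ρ.toLinearMap v) := by
      intro v
      induction v using TensorProduct.induction_on with
      | zero => simp
      | add u v hu hv => simp only [map_add, hu, hv]
      | tmul a u =>
        induction u using TensorProduct.induction_on with
        | zero => simp
        | add u v hu hv => simp only [map_add, tmul_add, hu, hv]
        | tmul c g =>
          simp only [TensorProduct.assoc_symm_tmul, TensorProduct.map_tmul,
            LinearMap.coe_comp, Function.comp_apply, TensorProduct.mk_apply,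
            LinearMap.flip_apply, LinearMap.mul'_apply, LinearMap.rTensor_tmul]
          rw [mul_assoc]
          congr 1
          simp [Algebra.TensorProduct.tmul_mul_tmul]
    rw [ZL]
    have hcomp : LinearMap.rTensor (T ⊗[k] H) ρ.toLinearMap
        (LinearMap.lTensor T ρ.toLinearMap (γ h))
        = TensorProduct.map ρ.toLinearMap ρ.toLinearMap (γ h) := by
      rw [← LinearMap.comp_apply, LinearMap.rTensor_comp_lTensor]
    rw [hcomp, mulTH_map_rho, G6 ρ β γ hβ hγ hcounit h]
    rw [map_smul, map_one, convUnit_apply, Algebra.algebraMap_eq_smul_one]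
  · -- conv ι (ι ∘ S) = convUnit
    have := conv_algHom_antipode (Algebra.TensorProduct.includeRight : H →ₐ[k] T ⊗[k] H)
    rwa [hiota] at this


set_option maxHeartbeats 2000000 in
set_option synthInstance.maxHeartbeats 400000 in
lemma G3
    (hcoassoc : ∀ x : T,
      (TensorProduct.map ρ.toLinearMap LinearMap.id) (ρ x)
        = (TensorProduct.assoc k T H H).symm
            ((TensorProduct.map LinearMap.id Coalgebra.comul) (ρ x)))
    (hcounit : ∀ x : T,
      (TensorProduct.rid k T)
        ((TensorProduct.map LinearMap.id Coalgebra.counit) (ρ x)) = x)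
    (hβ : ∀ x y : T, β (x ⊗ₜ[k] y) = (x ⊗ₜ[k] (1 : H)) * ρ y)
    (hβbij : Function.Bijective β)
    (hγ : ∀ h : H, β (γ h) = (1 : T) ⊗ₜ[k] h)
    (g₀ : H) :
    LinearMap.rTensor T ρ.toLinearMap (γ g₀)
      = LinearMap.rTensor T (TensorProduct.comm k H T).toLinearMap
          ((TensorProduct.assoc k H T T).symm
            (TensorProduct.map (HopfAlgebra.antipode (R := k)) γ (Coalgebra.comul g₀))) := by
  set S : H →ₗ[k] H := HopfAlgebra.antipode (R := k) with hS
  set permE : (T ⊗[k] H) ⊗[k] T ≃ₗ[k] (T ⊗[k] T) ⊗[k] H :=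
    (TensorProduct.assoc k T H T)
      ≪≫ₗ (TensorProduct.congr (LinearEquiv.refl k T) (TensorProduct.comm k H T))
      ≪≫ₗ (TensorProduct.assoc k T T H).symm with hpermE
  have permE_tmul : ∀ (x : T) (y : H) (c : T),
      permE ((x ⊗ₜ[k] y) ⊗ₜ[k] c) = (x ⊗ₜ[k] c) ⊗ₜ[k] y := by
    intro x y c
    simp [hpermE]
  have inj := rTensor_inj (k := k) (H := H) (T := T) β hβbij
  have Jinj : Function.Injective
      (fun z : (T ⊗[k] H) ⊗[k] T => LinearMap.rTensor H β (permE z)) :=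
    inj.comp permE.injective
  set Fu : (T ⊗[k] H) ⊗[k] (T ⊗[k] H) →ₗ[k] (T ⊗[k] H) ⊗[k] H :=
    LinearMap.rTensor H (LinearMap.rTensor H (LinearMap.mul' k T))
      ∘ₗ LinearMap.rTensor H (TensorProduct.assoc k T T H).symm.toLinearMap
      ∘ₗ (TensorProduct.assoc k T (T ⊗[k] H) H).symm.toLinearMap
      ∘ₗ LinearMap.lTensor T (TensorProduct.comm k H (T ⊗[k] H)).toLinearMap
      ∘ₗ (TensorProduct.assoc k T H (T ⊗[k] H)).toLinearMap with hFu
  set reorg2 : (T ⊗[k] H) ⊗[k] H →ₗ[k] (T ⊗[k] H) ⊗[k] H :=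
    (TensorProduct.assoc k T H H).symm.toLinearMap
      ∘ₗ LinearMap.lTensor T (TensorProduct.comm k H H).toLinearMap
      ∘ₗ (TensorProduct.assoc k T H H).toLinearMap with hreorg2
  have reorg2_tmul : ∀ (t : T) (g' g2 : H),
      reorg2 ((t ⊗ₜ[k] g') ⊗ₜ[k] g2) = (t ⊗ₜ[k] g2) ⊗ₜ[k] g' := by
    intro t g' g2
    simp [hreorg2]
  have Fu_tmul : ∀ (x : T) (y : H) (u₂ : T ⊗[k] H),
      Fu ((x ⊗ₜ[k] y) ⊗ₜ[k] u₂)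
        = LinearMap.rTensor H (LinearMap.mulLeft k (x ⊗ₜ[k] (1 : H))) (u₂ ⊗ₜ[k] y) := by
    intro x y u₂
    induction u₂ using TensorProduct.induction_on with
    | zero => simp
    | add u v hu hv => simp only [tmul_add, add_tmul, map_add, hu, hv]
    | tmul c g =>
      simp [hFu, Algebra.TensorProduct.tmul_mul_tmul]
  have sub2 : ∀ (U : T ⊗[k] H) (c : T) (g2 : H),
      Fu (U ⊗ₜ[k] (c ⊗ₜ[k] g2)) = reorg2 ((U * (c ⊗ₜ[k] (1 : H))) ⊗ₜ[k] g2) := by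
    intro U c g2
    induction U using TensorProduct.induction_on with
    | zero => simp
    | add u v hu hv => simp only [add_tmul, add_mul, map_add, hu, hv]
    | tmul x y =>
      rw [Fu_tmul, LinearMap.rTensor_tmul, LinearMap.mulLeft_apply,
        Algebra.TensorProduct.tmul_mul_tmul, Algebra.TensorProduct.tmul_mul_tmul,
        reorg2_tmul, one_mul, mul_one]
  have C1a' : ∀ (u : T ⊗[k] H) (c : T),
      LinearMap.rTensor H β (permE (u ⊗ₜ[k] c)) = Fu (u ⊗ₜ[k] (ρ c)) := by
    intro u c
    induction u using TensorProduct.induction_on with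
    | zero => simp
    | add u v hu hv => simp only [add_tmul, map_add, hu, hv]
    | tmul x y =>
      rw [permE_tmul, LinearMap.rTensor_tmul, hβ x c, Fu_tmul]
      have : ∀ u₂ : T ⊗[k] H,
          ((x ⊗ₜ[k] (1 : H)) * u₂) ⊗ₜ[k] y
            = LinearMap.rTensor H (LinearMap.mulLeft k (x ⊗ₜ[k] (1 : H))) (u₂ ⊗ₜ[k] y) := by
        intro u₂
        rw [LinearMap.rTensor_tmul, LinearMap.mulLeft_apply]
      rw [this]
  have C1a : ∀ v : T ⊗[k] T,
      LinearMap.rTensor H β (permE (LinearMap.rTensor T ρ.toLinearMap v))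
        = Fu (LinearMap.rTensor (T ⊗[k] H) ρ.toLinearMap
            (LinearMap.lTensor T ρ.toLinearMap v)) := by
    intro v
    induction v using TensorProduct.induction_on with
    | zero => simp
    | add u v hu hv => simp only [map_add, hu, hv]
    | tmul a c =>
      rw [LinearMap.rTensor_tmul, LinearMap.lTensor_tmul, LinearMap.rTensor_tmul, C1a']
      rfl
  have C1e : ∀ w : H ⊗[k] H,
      Fu (LinearMap.rTensor (T ⊗[k] H) ρ.toLinearMap
          ((TensorProduct.assoc k T T H) (LinearMap.rTensor H γ w)))
        = reorg2 (LinearMap.rTensor H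
            (LinearMap.mul' k (T ⊗[k] H)
              ∘ₗ TensorProduct.map ρ.toLinearMap ((TensorProduct.mk k T H).flip (1 : H)) ∘ₗ γ)
            w) := by
    intro w
    induction w using TensorProduct.induction_on with
    | zero => simp
    | add u v hu hv => simp only [map_add, hu, hv]
    | tmul g1 g2 =>
      rw [LinearMap.rTensor_tmul, LinearMap.rTensor_tmul]
      have sub3 : ∀ v : T ⊗[k] T,
          Fu (LinearMap.rTensor (T ⊗[k] H) ρ.toLinearMap
              ((TensorProduct.assoc k T T H) (v ⊗ₜ[k] g2)))
            = reorg2 ((LinearMap.mul' k (T ⊗[k] H)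
                (TensorProduct.map ρ.toLinearMap ((TensorProduct.mk k T H).flip (1 : H)) v))
                  ⊗ₜ[k] g2) := by
        intro v
        induction v using TensorProduct.induction_on with
        | zero => simp
        | add u v hu hv => simp only [map_add, add_tmul, hu, hv]
        | tmul a c =>
          rw [TensorProduct.assoc_tmul, LinearMap.rTensor_tmul, sub2]
          simp only [TensorProduct.map_tmul, LinearMap.mul'_apply, TensorProduct.mk_apply,
            LinearMap.flip_apply]
      rw [sub3 (γ g1)]
      rfl
  have C2 : ∀ y : H ⊗[k] (T ⊗[k] T),
      LinearMap.rTensor H β (permE (LinearMap.rTensor T (TensorProduct.comm k H T).toLinearMap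
          ((TensorProduct.assoc k H T T).symm y)))
        = LinearMap.rTensor H β ((TensorProduct.comm k H (T ⊗[k] T)) y) := by
    intro y
    induction y using TensorProduct.induction_on with
    | zero => simp
    | add u v hu hv => simp only [map_add, hu, hv]
    | tmul s v =>
      induction v using TensorProduct.induction_on with
      | zero => simp
      | add u v hu hv => simp only [map_add, tmul_add, hu, hv]
      | tmul u v' =>
        simp only [TensorProduct.assoc_symm_tmul, LinearMap.rTensor_tmul,
          LinearEquiv.coe_coe, TensorProduct.comm_tmul, permE_tmul]
  have C3' : ∀ w : H ⊗[k] H,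
      LinearMap.rTensor H β ((TensorProduct.comm k H (T ⊗[k] T))
          (TensorProduct.map S γ w))
        = reorg2 (LinearMap.rTensor H ((TensorProduct.mk k T H) (1 : T) ∘ₗ S) w) := by
    intro w
    induction w using TensorProduct.induction_on with
    | zero => simp
    | add u v hu hv => simp only [map_add, hu, hv]
    | tmul g1 g2 =>
      rw [TensorProduct.map_tmul, TensorProduct.comm_tmul, LinearMap.rTensor_tmul, hγ g2,
        LinearMap.rTensor_tmul]
      simp only [LinearMap.coe_comp, Function.comp_apply, TensorProduct.mk_apply]
      rw [reorg2_tmul]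
  refine Jinj ?_
  show LinearMap.rTensor H β (permE (LinearMap.rTensor T ρ.toLinearMap (γ g₀)))
      = LinearMap.rTensor H β (permE (LinearMap.rTensor T (TensorProduct.comm k H T).toLinearMap
          ((TensorProduct.assoc k H T T).symm
            (TensorProduct.map S γ (Coalgebra.comul g₀)))))
  rw [C1a (γ g₀), G4 ρ β γ hcoassoc hβ hγ hβbij g₀, C1e (Coalgebra.comul g₀),
    PsiEq ρ β γ hcoassoc hcounit hβ hβbij hγ, C2, C3']

set_option maxHeartbeats 2000000 in
set_option synthInstance.maxHeartbeats 400000 in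
lemma QGconv
    (hcoassoc : ∀ x : T,
      (TensorProduct.map ρ.toLinearMap LinearMap.id) (ρ x)
        = (TensorProduct.assoc k T H H).symm
            ((TensorProduct.map LinearMap.id Coalgebra.comul) (ρ x)))
    (hcounit : ∀ x : T,
      (TensorProduct.rid k T)
        ((TensorProduct.map LinearMap.id Coalgebra.counit) (ρ x)) = x)
    (hβ : ∀ x y : T, β (x ⊗ₜ[k] y) = (x ⊗ₜ[k] (1 : H)) * ρ y)
    (hβbij : Function.Bijective β)
    (hγ : ∀ h : H, β (γ h) = (1 : T) ⊗ₜ[k] h)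
    (m : H) :
    (LinearMap.mul' k (T ⊗[k] H) ∘ₗ (TensorProduct.comm k (T ⊗[k] H) (T ⊗[k] H)).toLinearMap
        ∘ₗ TensorProduct.map ρ.toLinearMap ρ.toLinearMap)
      (γ (HopfAlgebra.antipode (R := k) m))
      = conv ((TensorProduct.mk k T H) (1 : T) ∘ₗ HopfAlgebra.antipode (R := k))
          (TensorProduct.map
              (LinearMap.mul' k T ∘ₗ (TensorProduct.comm k T T).toLinearMap ∘ₗ γ
                ∘ₗ HopfAlgebra.antipode (R := k))
              (HopfAlgebra.antipode (R := k) ∘ₗ HopfAlgebra.antipode (R := k))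
            ∘ₗ Coalgebra.comul) m := by
  set S : H →ₗ[k] H := HopfAlgebra.antipode (R := k) with hS
  set q : T ⊗[k] T →ₗ[k] T ⊗[k] H :=
    LinearMap.mul' k (T ⊗[k] H) ∘ₗ (TensorProduct.comm k (T ⊗[k] H) (T ⊗[k] H)).toLinearMap
      ∘ₗ TensorProduct.map ρ.toLinearMap ρ.toLinearMap with hq
  set q₂ : T ⊗[k] (T ⊗[k] H) →ₗ[k] T ⊗[k] H :=
    LinearMap.mul' k (T ⊗[k] H) ∘ₗ (TensorProduct.comm k (T ⊗[k] H) (T ⊗[k] H)).toLinearMap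
      ∘ₗ LinearMap.rTensor (T ⊗[k] H) ρ.toLinearMap with hq2
  set B1 : ((T ⊗[k] H) ⊗[k] T) ⊗[k] H →ₗ[k] T ⊗[k] H :=
    LinearMap.mul' k (T ⊗[k] H) ∘ₗ (TensorProduct.comm k (T ⊗[k] H) (T ⊗[k] H)).toLinearMap
      ∘ₗ (TensorProduct.assoc k (T ⊗[k] H) T H).toLinearMap with hB1
  set K : (H ⊗[k] (T ⊗[k] T)) ⊗[k] H →ₗ[k] T ⊗[k] H :=
    TensorProduct.map (LinearMap.mul' k T ∘ₗ (TensorProduct.comm k T T).toLinearMap)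
        (LinearMap.mul' k H ∘ₗ (TensorProduct.comm k H H).toLinearMap)
      ∘ₗ (TensorProduct.assoc k (T ⊗[k] T) H H).toLinearMap
      ∘ₗ LinearMap.rTensor H (TensorProduct.comm k H (T ⊗[k] T)).toLinearMap with hK
  have K_tmul : ∀ (s : H) (v : T ⊗[k] T) (g : H),
      K ((s ⊗ₜ[k] v) ⊗ₜ[k] g)
        = (LinearMap.mul' k T ((TensorProduct.comm k T T) v)) ⊗ₜ[k] (g * s) := by
    intro s v g
    simp [hK]
  have stepi : ∀ v : T ⊗[k] T, q v = q₂ (LinearMap.lTensor T ρ.toLinearMap v) := by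
    intro v
    induction v using TensorProduct.induction_on with
    | zero => simp
    | add u v hu hv => simp only [map_add, hu, hv]
    | tmul a c => simp [hq, hq2]
  have SL1 : ∀ (v : T ⊗[k] T) (g : H),
      q₂ ((TensorProduct.assoc k T T H) (v ⊗ₜ[k] g))
        = B1 ((LinearMap.rTensor T ρ.toLinearMap v) ⊗ₜ[k] g) := by
    intro v g
    induction v using TensorProduct.induction_on with
    | zero => simp
    | add u v hu hv => simp only [map_add, add_tmul, hu, hv]
    | tmul a c => simp [hq2, hB1]
  have SL2 : ∀ (y : H ⊗[k] (T ⊗[k] T)) (g : H),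
      B1 ((LinearMap.rTensor T (TensorProduct.comm k H T).toLinearMap
          ((TensorProduct.assoc k H T T).symm y)) ⊗ₜ[k] g)
        = K (y ⊗ₜ[k] g) := by
    intro y g
    induction y using TensorProduct.induction_on with
    | zero => simp
    | add u v hu hv => simp only [map_add, add_tmul, hu, hv]
    | tmul s v =>
      induction v using TensorProduct.induction_on with
      | zero => simp
      | add u v hu hv => simp only [map_add, tmul_add, add_tmul, hu, hv]
      | tmul u v' =>
        rw [K_tmul]
        simp only [hB1, TensorProduct.assoc_symm_tmul, LinearMap.rTensor_tmul,
          LinearEquiv.coe_coe, TensorProduct.comm_tmul, LinearMap.coe_comp,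
          Function.comp_apply, TensorProduct.assoc_tmul, LinearMap.mul'_apply,
          Algebra.TensorProduct.tmul_mul_tmul]
  have E2 : ∀ w : H ⊗[k] H,
      q₂ ((TensorProduct.assoc k T T H) ((LinearMap.rTensor H γ) w))
        = K ((LinearMap.rTensor H (TensorProduct.map S γ ∘ₗ Coalgebra.comul)) w) := by
    intro w
    induction w using TensorProduct.induction_on with
    | zero => simp
    | add u v hu hv => simp only [map_add, hu, hv]
    | tmul g1 g2 =>
      rw [LinearMap.rTensor_tmul, LinearMap.rTensor_tmul, SL1,
        G3 ρ β γ hcoassoc hcounit hβ hβbij hγ g1, SL2]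
      rfl
  -- assemble the composite form
  have lhs1 : q (γ (S m))
      = K ((LinearMap.rTensor H (TensorProduct.map S γ ∘ₗ Coalgebra.comul))
          (Coalgebra.comul (S m))) := by
    rw [stepi, G4 ρ β γ hcoassoc hβ hγ hβbij (S m), E2]
  rw [lhs1]
  -- step iv : elementwise computation via representations
  have hδS : ∀ n : H, Coalgebra.comul (S n)
      = TensorProduct.map S S ((TensorProduct.comm k H H) (Coalgebra.comul n)) := by
    intro n
    have := LinearMap.congr_fun (comul_antipode (k := k) (H := H)) n
    simpa using this
  set r := Coalgebra.Repr.arbitrary k m with hr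
  set r2 : (i : r.ι) → Coalgebra.Repr k (r.right i) (H × H) :=
    fun i => Coalgebra.Repr.arbitrary k _ with hr2
  have lhs2 : K ((LinearMap.rTensor H (TensorProduct.map S γ ∘ₗ Coalgebra.comul))
        (Coalgebra.comul (S m)))
      = ∑ i ∈ r.index, ∑ j ∈ (r2 i).index,
          (LinearMap.mul' k T ((TensorProduct.comm k T T) (γ (S ((r2 i).left j)))))
            ⊗ₜ[k] (S (r.left i) * S (S ((r2 i).right j))) := by
    rw [hδS m, ← r.eq]
    simp only [map_sum]
    refine Finset.sum_congr rfl fun i _ => ?_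
    rw [TensorProduct.comm_tmul, TensorProduct.map_tmul, LinearMap.rTensor_tmul]
    have hinner : (TensorProduct.map S γ ∘ₗ Coalgebra.comul) (S (r.right i))
        = ∑ j ∈ (r2 i).index,
            (S (S ((r2 i).right j))) ⊗ₜ[k] γ (S ((r2 i).left j)) := by
      rw [LinearMap.comp_apply, hδS (r.right i), ← (r2 i).eq]
      simp only [map_sum]
      refine Finset.sum_congr rfl fun j _ => ?_
      rw [TensorProduct.comm_tmul, TensorProduct.map_tmul, TensorProduct.map_tmul]
    rw [hinner, TensorProduct.sum_tmul]
    simp only [map_sum]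
    refine Finset.sum_congr rfl fun j _ => ?_
    rw [K_tmul]
  rw [lhs2, conv_apply, ← r.eq]
  simp only [map_sum]
  refine Finset.sum_congr rfl fun i _ => ?_
  rw [TensorProduct.map_tmul, LinearMap.mul'_apply]
  rw [LinearMap.comp_apply, LinearMap.comp_apply, ← (r2 i).eq, map_sum, Finset.mul_sum]
  refine Finset.sum_congr rfl fun j _ => ?_
  simp only [TensorProduct.map_tmul, LinearMap.coe_comp, Function.comp_apply,
    LinearEquiv.coe_coe, TensorProduct.mk_apply, Algebra.TensorProduct.tmul_mul_tmul, one_mul]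

set_option maxHeartbeats 2000000 in
set_option synthInstance.maxHeartbeats 400000 in
theorem main
    (hcoassoc : ∀ x : T,
      (TensorProduct.map ρ.toLinearMap LinearMap.id) (ρ x)
        = (TensorProduct.assoc k T H H).symm
            ((TensorProduct.map LinearMap.id Coalgebra.comul) (ρ x)))
    (hcounit : ∀ x : T,
      (TensorProduct.rid k T)
        ((TensorProduct.map LinearMap.id Coalgebra.counit) (ρ x)) = x)
    (hβ : ∀ x y : T, β (x ⊗ₜ[k] y) = (x ⊗ₜ[k] (1 : H)) * ρ y)
    (hβbij : Function.Bijective β)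
    (hγ : ∀ h : H, β (γ h) = (1 : T) ⊗ₜ[k] h)
    (θ : T →ₗ[k] T)
    (hθ : θ = LinearMap.mul' k T
        ∘ₗ (TensorProduct.comm k T T).toLinearMap
        ∘ₗ LinearMap.lTensor T (LinearMap.mul' k T)
        ∘ₗ (TensorProduct.assoc k T T T).toLinearMap
        ∘ₗ LinearMap.rTensor T (TensorProduct.comm k T T).toLinearMap
        ∘ₗ (TensorProduct.assoc k T T T).symm.toLinearMap
        ∘ₗ LinearMap.lTensor T (γ ∘ₗ HopfAlgebra.antipode (R := k))
        ∘ₗ ρ.toLinearMap) :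
    ∀ x : T,
      ρ (θ x)
        = (TensorProduct.map θ
            (HopfAlgebra.antipode (R := k) ∘ₗ HopfAlgebra.antipode (R := k))) (ρ x) := by
  intro x
  -- notation
  set S : H →ₗ[k] H := HopfAlgebra.antipode (R := k) with hS
  set ξS : H →ₗ[k] T :=
    LinearMap.mul' k T ∘ₗ (TensorProduct.comm k T T).toLinearMap ∘ₗ γ ∘ₗ S with hξS
  set W : T ⊗[k] H →ₗ[k] T := LinearMap.mul' k T ∘ₗ LinearMap.lTensor T ξS with hW
  set gqL : H →ₗ[k] T ⊗[k] H :=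
    (LinearMap.mul' k (T ⊗[k] H) ∘ₗ (TensorProduct.comm k (T ⊗[k] H) (T ⊗[k] H)).toLinearMap
        ∘ₗ TensorProduct.map ρ.toLinearMap ρ.toLinearMap) ∘ₗ γ ∘ₗ S with hgqL
  set ηL : H →ₗ[k] T ⊗[k] H :=
    TensorProduct.map ξS (S ∘ₗ S) ∘ₗ Coalgebra.comul with hηL
  have hiota : (Algebra.TensorProduct.includeRight : H →ₐ[k] T ⊗[k] H).toLinearMap
      = (TensorProduct.mk k T H) (1 : T) := by
    ext h; rfl
  -- θ = W ∘ ρ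
  have θmap : θ = W ∘ₗ ρ.toLinearMap := by
    rw [hθ]
    apply LinearMap.ext
    intro y
    simp only [LinearMap.comp_apply, LinearEquiv.coe_coe]
    generalize ρ.toLinearMap y = u
    induction u using TensorProduct.induction_on with
    | zero => simp
    | add u v hu hv => simp only [map_add, hu, hv]
    | tmul t h =>
      rw [LinearMap.lTensor_tmul, LinearMap.comp_apply]
      have SUB : ∀ v : T ⊗[k] T,
          LinearMap.mul' k T ((TensorProduct.comm k T T)
            (LinearMap.lTensor T (LinearMap.mul' k T)
              ((TensorProduct.assoc k T T T)
                (LinearMap.rTensor T (TensorProduct.comm k T T).toLinearMap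
                  ((TensorProduct.assoc k T T T).symm (t ⊗ₜ[k] v))))))
            = t * LinearMap.mul' k T ((TensorProduct.comm k T T) v) := by
        intro v
        induction v using TensorProduct.induction_on with
        | zero => simp
        | add u v hu hv => simp only [map_add, tmul_add, mul_add, hu, hv]
        | tmul a c =>
          simp only [TensorProduct.assoc_symm_tmul, LinearMap.rTensor_tmul,
            LinearEquiv.coe_coe, TensorProduct.comm_tmul, TensorProduct.assoc_tmul,
            LinearMap.lTensor_tmul, LinearMap.mul'_apply, mul_assoc]
      rw [SUB (γ (S h))]
      simp only [hW, hξS, LinearMap.coe_comp, Function.comp_apply, LinearEquiv.coe_coe,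
        LinearMap.lTensor_tmul, LinearMap.mul'_apply]
  -- ρ ∘ W
  have E0' : ∀ v : T ⊗[k] T,
      ρ (LinearMap.mul' k T ((TensorProduct.comm k T T) v))
        = (LinearMap.mul' k (T ⊗[k] H) ∘ₗ (TensorProduct.comm k (T ⊗[k] H) (T ⊗[k] H)).toLinearMap
            ∘ₗ TensorProduct.map ρ.toLinearMap ρ.toLinearMap) v := by
    intro v
    induction v using TensorProduct.induction_on with
    | zero => simp
    | add u v hu hv => simp only [map_add, hu, hv]
    | tmul a c => simp
  have ρW : ∀ v : T ⊗[k] H,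
      ρ (W v) = LinearMap.mul' k (T ⊗[k] H)
        (TensorProduct.map ρ.toLinearMap gqL v) := by
    intro v
    induction v using TensorProduct.induction_on with
    | zero => simp
    | add u v hu hv => simp only [map_add, hu, hv]
    | tmul t h =>
      rw [TensorProduct.map_tmul, LinearMap.mul'_apply]
      have : W (t ⊗ₜ[k] h) = t * (LinearMap.mul' k T ((TensorProduct.comm k T T) (γ (S h)))) := by
        simp only [hW, hξS, LinearMap.coe_comp, Function.comp_apply, LinearEquiv.coe_coe,
          LinearMap.lTensor_tmul, LinearMap.mul'_apply]
      rw [this, map_mul, E0' (γ (S h))]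
      rfl
  -- conv ι gq = η
  have hgq : gqL = conv ((TensorProduct.mk k T H) (1 : T) ∘ₗ S) ηL := by
    apply LinearMap.ext
    intro m
    exact QGconv ρ β γ hcoassoc hcounit hβ hβbij hγ m
  have h1 : conv ((TensorProduct.mk k T H) (1 : T)) ((TensorProduct.mk k T H) (1 : T) ∘ₗ S)
      = convUnit := by
    have := conv_algHom_antipode (Algebra.TensorProduct.includeRight : H →ₐ[k] T ⊗[k] H)
    rwa [hiota] at this
  have convIota : conv ((TensorProduct.mk k T H) (1 : T)) gqL = ηL := by
    rw [hgq, ← conv_assoc, h1, convUnit_conv]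
  -- core computation
  have FENT : ∀ v : T ⊗[k] H,
      LinearMap.mul' k (T ⊗[k] H) (LinearMap.lTensor (T ⊗[k] H) gqL
          ((TensorProduct.assoc k T H H).symm
            (LinearMap.lTensor T (Coalgebra.comul (R := k)) v)))
        = TensorProduct.map W (S ∘ₗ S)
            ((TensorProduct.assoc k T H H).symm
              (LinearMap.lTensor T (Coalgebra.comul (R := k)) v)) := by
    intro v
    induction v using TensorProduct.induction_on with
    | zero => simp
    | add u v hu hv => simp only [map_add, hu, hv]
    | tmul t h =>
      set r := Coalgebra.Repr.arbitrary k h with hr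
      have hz : (TensorProduct.assoc k T H H).symm
            (LinearMap.lTensor T (Coalgebra.comul (R := k)) (t ⊗ₜ[k] h))
          = ∑ i ∈ r.index, (t ⊗ₜ[k] r.left i) ⊗ₜ[k] r.right i := by
        rw [LinearMap.lTensor_tmul, ← r.eq, TensorProduct.tmul_sum, map_sum]
        refine Finset.sum_congr rfl fun i _ => ?_
        rw [TensorProduct.assoc_symm_tmul]
      rw [hz, map_sum, map_sum, map_sum]
      have lhs3 : ∀ i ∈ r.index,
          LinearMap.mul' k (T ⊗[k] H) (LinearMap.lTensor (T ⊗[k] H) gqL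
              ((t ⊗ₜ[k] r.left i) ⊗ₜ[k] r.right i))
            = (t ⊗ₜ[k] (1 : H)) * (((1 : T) ⊗ₜ[k] r.left i) * gqL (r.right i)) := by
        intro i _
        rw [LinearMap.lTensor_tmul, LinearMap.mul'_apply, ← mul_assoc,
          Algebra.TensorProduct.tmul_mul_tmul, mul_one, one_mul]
      rw [Finset.sum_congr rfl lhs3, ← Finset.mul_sum]
      have conv_pt : ∑ i ∈ r.index, ((1 : T) ⊗ₜ[k] r.left i) * gqL (r.right i) = ηL h := by
        have := LinearMap.congr_fun convIota h
        rw [conv_apply, ← r.eq, map_sum, map_sum] at this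
        calc ∑ i ∈ r.index, ((1 : T) ⊗ₜ[k] r.left i) * gqL (r.right i)
            = ∑ i ∈ r.index, LinearMap.mul' k (T ⊗[k] H)
                (TensorProduct.map ((TensorProduct.mk k T H) (1 : T)) gqL
                  (r.left i ⊗ₜ[k] r.right i)) := by
              refine Finset.sum_congr rfl fun i _ => ?_
              rw [TensorProduct.map_tmul, LinearMap.mul'_apply, TensorProduct.mk_apply]
          _ = ηL h := this
      rw [conv_pt]
      have ηsum : ηL h = ∑ i ∈ r.index, ξS (r.left i) ⊗ₜ[k] (S (S (r.right i))) := by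
        rw [hηL, LinearMap.comp_apply, ← r.eq, map_sum]
        refine Finset.sum_congr rfl fun i _ => ?_
        rw [TensorProduct.map_tmul]
        rfl
      rw [ηsum, Finset.mul_sum]
      refine Finset.sum_congr rfl fun i _ => ?_
      rw [TensorProduct.map_tmul, Algebra.TensorProduct.tmul_mul_tmul, one_mul]
      congr 1
  -- assemble
  have goal1 : ρ (θ x) = LinearMap.mul' k (T ⊗[k] H)
      (TensorProduct.map ρ.toLinearMap gqL (ρ x)) := by
    rw [θmap]
    exact ρW (ρ x)
  rw [goal1]
  have split : TensorProduct.map ρ.toLinearMap gqL (ρ x)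
      = LinearMap.lTensor (T ⊗[k] H) gqL
          (LinearMap.rTensor H ρ.toLinearMap (ρ x)) := by
    rw [← LinearMap.comp_apply, LinearMap.lTensor_comp_rTensor]
  have hco : LinearMap.rTensor H ρ.toLinearMap (ρ x)
      = (TensorProduct.assoc k T H H).symm
          (LinearMap.lTensor T (Coalgebra.comul (R := k)) (ρ x)) := by
    have := hcoassoc x
    exact this
  have rhs1 : TensorProduct.map θ (S ∘ₗ S) (ρ x)
      = TensorProduct.map W (S ∘ₗ S) (LinearMap.rTensor H ρ.toLinearMap (ρ x)) := by
    rw [θmap]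
    have e : TensorProduct.map (W ∘ₗ ρ.toLinearMap) (S ∘ₗ S)
        = TensorProduct.map W (S ∘ₗ S) ∘ₗ TensorProduct.map ρ.toLinearMap LinearMap.id := by
      rw [← TensorProduct.map_comp, LinearMap.comp_id]
    rw [e, LinearMap.comp_apply]
    rfl
  rw [split, hco, FENT (ρ x), rhs1, hco]

end Stmt9



/-- For a faithfully flat `H`-Galois object `T`,
`ρ(θ(x)) = θ(x₍₀₎) ⊗ S²(x₍₁₎)`: the map `θ` is `H`-colinear from `T` with its
given coaction to `T` with the coaction twisted by `S²`. -/
theorem stmt_9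
    {k : Type*} [CommRing k] {H : Type*} [Ring H] [HopfAlgebra k H]
    {T : Type*} [Ring T] [Algebra k T]
    -- `ρ` is an algebra map making `T` a right `H`-comodule algebra:
    (ρ : T →ₐ[k] T ⊗[k] H)
    (hcoassoc : ∀ x : T,
      (TensorProduct.map ρ.toLinearMap LinearMap.id) (ρ x)
        = (TensorProduct.assoc k T H H).symm
            ((TensorProduct.map LinearMap.id Coalgebra.comul) (ρ x)))
    (hcounit : ∀ x : T,
      (TensorProduct.rid k T)
        ((TensorProduct.map LinearMap.id Coalgebra.counit) (ρ x)) = x)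
    -- the coinvariants are exactly `k·1`:
    (hcoinv : {t : T | ρ t = t ⊗ₜ[k] (1 : H)} = Set.range (algebraMap k T))
    -- `T` is faithfully flat over `k`:
    (hflat : Module.FaithfullyFlat k T)
    -- the canonical (Galois) map `β(x ⊗ y) = x·y₍₀₎ ⊗ y₍₁₎`, assumed bijective:
    (β : T ⊗[k] T →ₗ[k] T ⊗[k] H)
    (hβ : ∀ x y : T, β (x ⊗ₜ[k] y) = (x ⊗ₜ[k] (1 : H)) * ρ y)
    (hβbij : Function.Bijective β)
    -- `γ(h) = β⁻¹(1 ⊗ h) = h⁽¹⁾ ⊗ h⁽²⁾`: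
    (γ : H →ₗ[k] T ⊗[k] T)
    (hγ : ∀ h : H, β (γ h) = (1 : T) ⊗ₜ[k] h)
    -- `θ(x) = (x₍₀₎·S(x₍₁₎)⁽²⁾)·S(x₍₁₎)⁽¹⁾`:
    (θ : T →ₗ[k] T)
    (hθ : θ = LinearMap.mul' k T
        ∘ₗ (TensorProduct.comm k T T).toLinearMap
        ∘ₗ LinearMap.lTensor T (LinearMap.mul' k T)
        ∘ₗ (TensorProduct.assoc k T T T).toLinearMap
        ∘ₗ LinearMap.rTensor T (TensorProduct.comm k T T).toLinearMap
        ∘ₗ (TensorProduct.assoc k T T T).symm.toLinearMap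
        ∘ₗ LinearMap.lTensor T (γ ∘ₗ HopfAlgebra.antipode (R := k))
        ∘ₗ ρ.toLinearMap)
    :
    ∀ x : T,
      ρ (θ x)
        = (TensorProduct.map θ
            (HopfAlgebra.antipode (R := k) ∘ₗ HopfAlgebra.antipode (R := k))) (ρ x) := by
  intro x
  exact Stmt9.main ρ β γ hcoassoc hcounit hβ hβbij hγ θ hθ x
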